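/- Let X = W ⊕_a Z be the absolute sum of real Banach spaces W and Z with respect to an absolute norm N which is of type 1 or of type ∞ (so W is an absolute summand of X of type 1 or ∞). If W ⊕_a Z has the weak BPBp for numerical radius (weak BPBp-nu), then W has the weak BPBp-nu. -/

import Mathlib

open Filter Topology

/-- `N` is an absolute norm on `ℝ²`: a norm with `N(1,0)=N(0,1)=1` and
`N(s,t)=N(|s|,|t|)`. -/
structure IsAbsoluteNorm (N : ℝ → ℝ → ℝ) : Prop where
  nonneg : ∀ s t : ℝ, 0 ≤ N s t
  eq_zero_iff : ∀ s t : ℝ, N s t = 0 ↔ s = 0 ∧ t = 0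
  triangle : ∀ s₁ t₁ s₂ t₂ : ℝ, N (s₁ + s₂) (t₁ + t₂) ≤ N s₁ t₁ + N s₂ t₂
  smul : ∀ c s t : ℝ, N (c * s) (c * t) = |c| * N s t
  one_zero : N 1 0 = 1
  zero_one : N 0 1 = 1
  abs_eq : ∀ s t : ℝ, N s t = N |s| |t|

/-- An absolute norm is of type 1 if `|x| + K|y| ≤ N(x,y)` for some `K > 0`. -/
def AbsNormTypeOne (N : ℝ → ℝ → ℝ) : Prop :=
  ∃ K : ℝ, 0 < K ∧ ∀ x y : ℝ, |x| + K * |y| ≤ N x y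

/-- An absolute norm is of type ∞ if `N(1,b₀) = 1` for some `b₀ > 0`. -/
def AbsNormTypeInfty (N : ℝ → ℝ → ℝ) : Prop :=
  ∃ b₀ : ℝ, 0 < b₀ ∧ N 1 b₀ = 1

/-- The numerical radius of a bounded linear operator on `X`:
`v(T) = sup {|x*(T x)| : ‖x‖ = ‖x*‖ = 1, x*(x) = 1}`. -/
noncomputable def NumRadius {X : Type*} [NormedAddCommGroup X] [NormedSpace ℝ X]
    (T : X →L[ℝ] X) : ℝ :=
  sSup {r : ℝ | ∃ (x : X) (f : X →L[ℝ] ℝ),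
    ‖x‖ = 1 ∧ ‖f‖ = 1 ∧ f x = 1 ∧ r = |f (T x)|}

/-- `X` has the weak Bishop–Phelps–Bollobás property for numerical radius. -/
def HasWeakBPBnu (X : Type*) [NormedAddCommGroup X] [NormedSpace ℝ X] : Prop :=
  ∀ ε : ℝ, 0 < ε → ∃ η : ℝ, 0 < η ∧
    ∀ (T : X →L[ℝ] X) (x : X) (f : X →L[ℝ] ℝ),
      NumRadius T = 1 → ‖x‖ = 1 → ‖f‖ = 1 → f x = 1 → 1 - η < |f (T x)| →
      ∃ (S : X →L[ℝ] X) (x₀ : X) (f₀ : X →L[ℝ] ℝ),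
        ‖x₀‖ = 1 ∧ ‖f₀‖ = 1 ∧ f₀ x₀ = 1 ∧
        |f₀ (S x₀)| = NumRadius S ∧ ‖f₀ - f‖ < ε ∧ ‖x₀ - x‖ < ε ∧ ‖S - T‖ < ε

namespace AbsHelp

variable {N : ℝ → ℝ → ℝ}

lemma N_s_zero (hN : IsAbsoluteNorm N) (s : ℝ) : N s 0 = |s| := by
  have := hN.smul s 1 0
  simp only [mul_one, mul_zero, hN.one_zero] at this
  simpa using this

lemma N_zero_t (hN : IsAbsoluteNorm N) (t : ℝ) : N 0 t = |t| := by
  have := hN.smul t 0 1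
  simp only [mul_one, mul_zero, hN.zero_one] at this
  simpa using this

lemma N_neg_right (hN : IsAbsoluteNorm N) (s t : ℝ) : N s (-t) = N s t := by
  rw [hN.abs_eq s (-t), abs_neg, ← hN.abs_eq]

lemma fst_le (hN : IsAbsoluteNorm N) (s t : ℝ) : |s| ≤ N s t := by
  have h := hN.triangle s t s (-t)
  rw [N_neg_right hN] at h
  have h2 : N (s + s) (t + -t) = 2 * |s| := by
    have hs2 : N (2*s) (2*0) = |(2:ℝ)| * N s 0 := hN.smul 2 s 0
    rw [N_s_zero hN] at hs2
    have hss : s + s = 2*s := by ring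
    rw [hss, add_neg_cancel]
    simpa using hs2
  linarith [h2 ▸ h]

lemma snd_le (hN : IsAbsoluteNorm N) (s t : ℝ) : |t| ≤ N s t := by
  have h := hN.triangle s t (-s) t
  have hneg : N (-s) t = N s t := by rw [hN.abs_eq (-s) t, abs_neg, ← hN.abs_eq]
  rw [hneg] at h
  have h2 : N (s + -s) (t + t) = 2 * |t| := by
    have hs2 : N (2*0) (2*t) = |(2:ℝ)| * N 0 t := hN.smul 2 0 t
    rw [N_zero_t hN] at hs2
    have hss : t + t = 2*t := by ring
    rw [hss, add_neg_cancel]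
    simpa using hs2
  linarith [h2 ▸ h]

lemma mono_right (hN : IsAbsoluteNorm N) {s t₁ t₂ : ℝ} (h : |t₁| ≤ |t₂|) :
    N s t₁ ≤ N s t₂ := by
  rw [hN.abs_eq s t₁, hN.abs_eq s t₂]
  set a := |s| with ha
  set b₁ := |t₁|
  set b₂ := |t₂|
  have hb₁ : 0 ≤ b₁ := abs_nonneg _
  have hb₂ : 0 ≤ b₂ := abs_nonneg _
  rcases eq_or_lt_of_le (le_trans hb₁ h) with h0 | h0
  · have : b₁ = 0 := le_antisymm (h.trans h0.symm.le) hb₁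
    rw [this, ← h0]
  · set lam := (b₂ + b₁) / (2 * b₂) with hlam
    have hl0 : 0 ≤ lam := by positivity
    have hl1 : lam ≤ 1 := by
      rw [hlam, div_le_one (by linarith)]; linarith
    have harg1 : lam * a + (1 - lam) * a = a := by ring
    have harg2 : lam * b₂ + (1 - lam) * (-b₂) = b₁ := by
      have hm : lam * (2 * b₂) = b₂ + b₁ := by
        rw [hlam]; exact div_mul_cancel₀ _ (mul_ne_zero two_ne_zero h0.ne')
      linear_combination hm
    calc N a b₁ = N (lam * a + (1 - lam) * a) (lam * b₂ + (1 - lam) * (-b₂)) := by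
          rw [harg1, harg2]
      _ ≤ N (lam * a) (lam * b₂) + N ((1-lam) * a) ((1-lam) * (-b₂)) :=
          hN.triangle _ _ _ _
      _ = lam * N a b₂ + (1 - lam) * N a (-b₂) := by
          rw [hN.smul, hN.smul, abs_of_nonneg hl0, abs_of_nonneg (by linarith)]
      _ = N a b₂ := by rw [N_neg_right hN]; ring

lemma mono_left (hN : IsAbsoluteNorm N) {s₁ s₂ t : ℝ} (h : |s₁| ≤ |s₂|) :
    N s₁ t ≤ N s₂ t := by
  rw [hN.abs_eq s₁ t, hN.abs_eq s₂ t]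
  set a₁ := |s₁|
  set a₂ := |s₂|
  set b := |t|
  have ha₁ : 0 ≤ a₁ := abs_nonneg _
  have ha₂ : 0 ≤ a₂ := abs_nonneg _
  rcases eq_or_lt_of_le (le_trans ha₁ h) with h0 | h0
  · have : a₁ = 0 := le_antisymm (h.trans h0.symm.le) ha₁
    rw [this, ← h0]
  · set lam := (a₂ + a₁) / (2 * a₂) with hlam
    have hl0 : 0 ≤ lam := by positivity
    have hl1 : lam ≤ 1 := by
      rw [hlam, div_le_one (by linarith)]; linarith
    have harg2 : lam * a₂ + (1 - lam) * (-a₂) = a₁ := by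
      have hm : lam * (2 * a₂) = a₂ + a₁ := by
        rw [hlam]; exact div_mul_cancel₀ _ (mul_ne_zero two_ne_zero h0.ne')
      linear_combination hm
    have harg1 : lam * b + (1 - lam) * b = b := by ring
    have hnegl : N (-a₂) b = N a₂ b := by
      rw [hN.abs_eq (-a₂) b, abs_neg, ← hN.abs_eq]
    calc N a₁ b = N (lam * a₂ + (1 - lam) * (-a₂)) (lam * b + (1 - lam) * b) := by
          rw [harg1, harg2]
      _ ≤ N (lam * a₂) (lam * b) + N ((1-lam) * (-a₂)) ((1-lam) * b) :=
          hN.triangle _ _ _ _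
      _ = lam * N a₂ b + (1 - lam) * N (-a₂) b := by
          rw [hN.smul, hN.smul, abs_of_nonneg hl0, abs_of_nonneg (by linarith)]
      _ = N a₂ b := by rw [hnegl]; ring

lemma mono (hN : IsAbsoluteNorm N) {s₁ s₂ t₁ t₂ : ℝ} (hs : |s₁| ≤ |s₂|) (ht : |t₁| ≤ |t₂|) :
    N s₁ t₁ ≤ N s₂ t₂ :=
  (mono_right hN ht).trans (mono_left hN hs)

lemma numRadius_ub {Y : Type*} [NormedAddCommGroup Y] [NormedSpace ℝ Y] (T : Y →L[ℝ] Y) :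
    ∀ r ∈ {r : ℝ | ∃ (x : Y) (f : Y →L[ℝ] ℝ), ‖x‖ = 1 ∧ ‖f‖ = 1 ∧ f x = 1 ∧ r = |f (T x)|},
      r ≤ ‖T‖ := by
  rintro r ⟨x, f, hx, hf, hfx, rfl⟩
  calc |f (T x)| = ‖f (T x)‖ := (Real.norm_eq_abs _).symm
    _ ≤ ‖f‖ * ‖T x‖ := f.le_opNorm _
    _ ≤ 1 * (‖T‖ * ‖x‖) := by
        rw [hf, one_mul, one_mul]; exact T.le_opNorm x
    _ = ‖T‖ := by rw [hx, one_mul, mul_one]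

lemma abs_le_numRadius {Y : Type*} [NormedAddCommGroup Y] [NormedSpace ℝ Y] (T : Y →L[ℝ] Y)
    {x : Y} {f : Y →L[ℝ] ℝ} (hx : ‖x‖ = 1) (hf : ‖f‖ = 1) (hfx : f x = 1) :
    |f (T x)| ≤ NumRadius T := by
  unfold NumRadius
  exact le_csSup ⟨‖T‖, numRadius_ub T⟩ ⟨x, f, hx, hf, hfx, rfl⟩

section Main

variable {W Z X : Type*}
  [NormedAddCommGroup W] [NormedSpace ℝ W]
  [NormedAddCommGroup Z] [NormedSpace ℝ Z]
  [NormedAddCommGroup X] [NormedSpace ℝ X]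
  (j : W →L[ℝ] X) (jZ : Z →L[ℝ] X) (π : X →L[ℝ] W) (q : X →L[ℝ] Z)

lemma pairing (hN : IsAbsoluteNorm N)
    (hπj : ∀ u, π (j u) = u) (hqj : ∀ u, q (j u) = 0)
    (hπjZ : ∀ v, π (jZ v) = 0) (hqjZ : ∀ v, q (jZ v) = v)
    (hnorm : ∀ x : X, ‖x‖ = N ‖π x‖ ‖q x‖)
    (g : X →L[ℝ] ℝ) (hg : ‖g‖ ≤ 1) (s t : ℝ) (hs : 0 ≤ s) (ht : 0 ≤ t) :
    ‖g.comp j‖ * s + ‖g.comp jZ‖ * t ≤ N s t := by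
  refine le_of_forall_pos_le_add fun δ hδ => ?_
  set c := ‖g.comp j‖ with hc
  set d := ‖g.comp jZ‖ with hd
  set δ' := δ / (s + t + 1) with hδ'
  have hδ'pos : 0 < δ' := by positivity
  have hex : ∀ (φ : W →L[ℝ] ℝ), ∃ u : W, ‖u‖ ≤ 1 ∧ ‖φ‖ - δ' < φ u := by
    intro φ
    obtain ⟨u, hu1, hu2⟩ := φ.exists_lt_apply_of_lt_opNorm (show ‖φ‖ - δ' < ‖φ‖ by linarith)
    rcases le_total 0 (φ u) with h' | h'
    · exact ⟨u, hu1.le, by rwa [Real.norm_eq_abs, abs_of_nonneg h'] at hu2⟩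
    · refine ⟨-u, by simpa using hu1.le, ?_⟩
      rw [map_neg]
      rwa [Real.norm_eq_abs, abs_of_nonpos h'] at hu2
  have hexZ : ∀ (φ : Z →L[ℝ] ℝ), ∃ v : Z, ‖v‖ ≤ 1 ∧ ‖φ‖ - δ' < φ v := by
    intro φ
    obtain ⟨u, hu1, hu2⟩ := φ.exists_lt_apply_of_lt_opNorm (show ‖φ‖ - δ' < ‖φ‖ by linarith)
    rcases le_total 0 (φ u) with h' | h'
    · exact ⟨u, hu1.le, by rwa [Real.norm_eq_abs, abs_of_nonneg h'] at hu2⟩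
    · refine ⟨-u, by simpa using hu1.le, ?_⟩
      rw [map_neg]
      rwa [Real.norm_eq_abs, abs_of_nonpos h'] at hu2
  obtain ⟨u, hu1, hu2⟩ := hex (g.comp j)
  obtain ⟨v, hv1, hv2⟩ := hexZ (g.comp jZ)
  have key : (g.comp j) (s • u) + (g.comp jZ) (t • v) ≤ N s t := by
    have h1 : (g.comp j) (s • u) + (g.comp jZ) (t • v) = g (j (s • u) + jZ (t • v)) := by
      simp
    have h2 : ‖j (s • u) + jZ (t • v)‖ = N ‖s • u‖ ‖t • v‖ := by
      rw [hnorm]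
      congr 2
      · rw [map_add, hπj, hπjZ, add_zero]
      · rw [map_add, hqj, hqjZ, zero_add]
    have h3 : N ‖s • u‖ ‖t • v‖ ≤ N s t := by
      refine mono hN ?_ ?_
      · rw [abs_of_nonneg (norm_nonneg _), abs_of_nonneg hs, norm_smul,
          Real.norm_eq_abs, abs_of_nonneg hs]
        exact mul_le_of_le_one_right hs hu1
      · rw [abs_of_nonneg (norm_nonneg _), abs_of_nonneg ht, norm_smul,
          Real.norm_eq_abs, abs_of_nonneg ht]
        exact mul_le_of_le_one_right ht hv1
    calc (g.comp j) (s • u) + (g.comp jZ) (t • v)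
        = g (j (s • u) + jZ (t • v)) := h1
      _ ≤ |g (j (s • u) + jZ (t • v))| := le_abs_self _
      _ ≤ ‖g‖ * ‖j (s • u) + jZ (t • v)‖ := by
          rw [← Real.norm_eq_abs]; exact g.le_opNorm _
      _ ≤ 1 * (N s t) := by
          rw [h2]
          exact mul_le_mul hg h3 (by rw [← h2]; exact norm_nonneg _) zero_le_one
      _ = N s t := one_mul _
  have e1 : (g.comp j) (s • u) = s * (g.comp j) u := by
    rw [map_smul, smul_eq_mul]
  have e2 : (g.comp jZ) (t • v) = t * (g.comp jZ) v := by
    rw [map_smul, smul_eq_mul]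
  have h4 : s * (c - δ') ≤ s * (g.comp j) u := mul_le_mul_of_nonneg_left hu2.le hs
  have h5 : t * (d - δ') ≤ t * (g.comp jZ) v := mul_le_mul_of_nonneg_left hv2.le ht
  have h6 : δ' * (s + t) ≤ δ := by
    rw [hδ', div_mul_eq_mul_div, div_le_iff₀ (by positivity)]
    nlinarith
  nlinarith [key, e1 ▸ h4, e2 ▸ h5]

lemma squeeze (hN : IsAbsoluteNorm N)
    (hπj : ∀ u, π (j u) = u) (hqj : ∀ u, q (j u) = 0)
    (hπjZ : ∀ v, π (jZ v) = 0) (hqjZ : ∀ v, q (jZ v) = v)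
    (hdecomp : ∀ x : X, j (π x) + jZ (q x) = x)
    (hnorm : ∀ x : X, ‖x‖ = N ‖π x‖ ‖q x‖)
    (g : X →L[ℝ] ℝ) (y : X) (hg : ‖g‖ = 1) (hy : ‖y‖ = 1) (hgy : g y = 1) :
    (g.comp j) (π y) = ‖g.comp j‖ * ‖π y‖ ∧
    (g.comp jZ) (q y) = ‖g.comp jZ‖ * ‖q y‖ ∧
    ‖g.comp j‖ * ‖π y‖ + ‖g.comp jZ‖ * ‖q y‖ = 1 := by
  have hp := pairing j jZ π q hN hπj hqj hπjZ hqjZ hnorm g hg.le ‖π y‖ ‖q y‖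
    (norm_nonneg _) (norm_nonneg _)
  rw [← hnorm, hy] at hp
  have hsum : (g.comp j) (π y) + (g.comp jZ) (q y) = 1 := by
    have : g (j (π y)) + g (jZ (q y)) = g (j (π y) + jZ (q y)) := (map_add g _ _).symm
    simp only [ContinuousLinearMap.comp_apply]
    rw [this, hdecomp, hgy]
  have h1 : (g.comp j) (π y) ≤ ‖g.comp j‖ * ‖π y‖ := by
    calc (g.comp j) (π y) ≤ |(g.comp j) (π y)| := le_abs_self _
      _ ≤ ‖g.comp j‖ * ‖π y‖ := by rw [← Real.norm_eq_abs]; exact (g.comp j).le_opNorm _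
  have h2 : (g.comp jZ) (q y) ≤ ‖g.comp jZ‖ * ‖q y‖ := by
    calc (g.comp jZ) (q y) ≤ |(g.comp jZ) (q y)| := le_abs_self _
      _ ≤ ‖g.comp jZ‖ * ‖q y‖ := by rw [← Real.norm_eq_abs]; exact (g.comp jZ).le_opNorm _
  refine ⟨by linarith, by linarith, by linarith⟩

end Main

end AbsHelp

namespace AbsHelp

open ContinuousLinearMap

variable {W Z X : Type*}
  [NormedAddCommGroup W] [NormedSpace ℝ W]
  [NormedAddCommGroup Z] [NormedSpace ℝ Z]
  [NormedAddCommGroup X] [NormedSpace ℝ X]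

set_option maxHeartbeats 1000000 in
theorem core {N : ℝ → ℝ → ℝ} (hN : IsAbsoluteNorm N)
    (j : W →L[ℝ] X) (jZ : Z →L[ℝ] X) (π : X →L[ℝ] W) (q : X →L[ℝ] Z)
    (hπj : ∀ u, π (j u) = u) (hqj : ∀ u, q (j u) = 0)
    (hπjZ : ∀ v, π (jZ v) = 0) (hqjZ : ∀ v, q (jZ v) = v)
    (hdecomp : ∀ x : X, j (π x) + jZ (q x) = x)
    (hnorm : ∀ x : X, ‖x‖ = N ‖π x‖ ‖q x‖)
    (κ : ℝ) (hκ : 0 < κ)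
    (hcase : ∀ a b c d : ℝ, 0 ≤ a → 0 ≤ b → 0 ≤ c → 0 ≤ d →
      N a b = 1 → c * a + d * b = 1 →
      (∀ s t : ℝ, 0 ≤ s → 0 ≤ t → c * s + d * t ≤ N s t) →
      b < κ → d < κ →
      a = 1 ∧ c = 1 ∧ d * b = 0 ∧ N 1 b = 1 ∧
        (∀ s t : ℝ, 0 ≤ s → 0 ≤ t → s + d * t ≤ N s t))
    (h : HasWeakBPBnu X) : HasWeakBPBnu W := by
  have hje : ∀ u : W, ‖j u‖ = ‖u‖ := by
    intro u
    rw [hnorm, hπj, hqj, norm_zero, N_s_zero hN, abs_of_nonneg (norm_nonneg u)]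
  have hjZe : ∀ v : Z, ‖jZ v‖ = ‖v‖ := by
    intro v
    rw [hnorm, hπjZ, hqjZ, norm_zero, N_zero_t hN, abs_of_nonneg (norm_nonneg v)]
  have hπ1 : ∀ x : X, ‖π x‖ ≤ ‖x‖ := by
    intro x
    have := fst_le hN ‖π x‖ ‖q x‖
    rw [abs_of_nonneg (norm_nonneg _)] at this
    rw [hnorm x]; exact this
  have hq1 : ∀ x : X, ‖q x‖ ≤ ‖x‖ := by
    intro x
    have := snd_le hN ‖π x‖ ‖q x‖
    rw [abs_of_nonneg (norm_nonneg _)] at this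
    rw [hnorm x]; exact this
  intro ε hε
  set ε' := min (min (ε/8) κ) 1 with hε'def
  have hε'pos : 0 < ε' := lt_min (lt_min (by linarith) hκ) one_pos
  have hε'le : ε' ≤ ε/8 := (min_le_left _ _).trans (min_le_left _ _)
  have hε'κ : ε' ≤ κ := (min_le_left _ _).trans (min_le_right _ _)
  have hε'1 : ε' ≤ 1 := min_le_right _ _
  obtain ⟨η, hηpos, hmain⟩ := h ε' hε'pos
  refine ⟨η, hηpos, ?_⟩
  intro T x f hvT hx hf hfx hTx
  set Tt : X →L[ℝ] X := (j.comp T).comp π with hTtdef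
  set ft : X →L[ℝ] ℝ := f.comp π with hftdef
  have hftj : ∀ u : W, ft (j u) = f u := by
    intro u; simp only [hftdef, ContinuousLinearMap.comp_apply, hπj]
  have hjx : ‖j x‖ = 1 := by rw [hje, hx]
  have hft_norm : ‖ft‖ = 1 := by
    refine le_antisymm (ContinuousLinearMap.opNorm_le_bound _ zero_le_one fun y => ?_) ?_
    · rw [one_mul]
      calc ‖ft y‖ = ‖f (π y)‖ := rfl
        _ ≤ ‖f‖ * ‖π y‖ := f.le_opNorm _
        _ ≤ ‖y‖ := by rw [hf, one_mul]; exact hπ1 y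
    · have h1 : (1:ℝ) = ‖ft (j x)‖ := by
        rw [hftj, hfx]; simp
      calc (1:ℝ) = ‖ft (j x)‖ := h1
        _ ≤ ‖ft‖ * ‖j x‖ := ft.le_opNorm _
        _ = ‖ft‖ := by rw [hjx, mul_one]
  -- numerical radius of Tt equals 1
  have hTt_apply : ∀ y : X, Tt y = j (T (π y)) := fun y => rfl
  have hTt_ub : ∀ r ∈ {r : ℝ | ∃ (y : X) (g : X →L[ℝ] ℝ),
      ‖y‖ = 1 ∧ ‖g‖ = 1 ∧ g y = 1 ∧ r = |g (Tt y)|}, r ≤ 1 := by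
    rintro r ⟨y, g, hy, hg, hgy, rfl⟩
    obtain ⟨hA1, hA2, hA3⟩ := squeeze j jZ π q hN hπj hqj hπjZ hqjZ hdecomp hnorm g y hg hy hgy
    have hval : g (Tt y) = (g.comp j) (T (π y)) := by
      rw [hTt_apply]; rfl
    rcases eq_or_ne ‖π y‖ 0 with h0 | h0
    · have : π y = 0 := norm_eq_zero.mp h0
      rw [hval, this, map_zero, map_zero]
      simp
    rcases eq_or_ne ‖g.comp j‖ 0 with hc0 | hc0
    · have : g.comp j = 0 := by rwa [norm_eq_zero] at hc0
      rw [hval, this]; simp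
    have ha0 : 0 < ‖π y‖ := lt_of_le_of_ne (norm_nonneg _) (Ne.symm h0)
    have hc0' : 0 < ‖g.comp j‖ := lt_of_le_of_ne (norm_nonneg _) (Ne.symm hc0)
    set u := ‖π y‖⁻¹ • π y with hu_def
    set f' := ‖g.comp j‖⁻¹ • (g.comp j) with hf'_def
    have hu : ‖u‖ = 1 := by
      rw [hu_def, norm_smul, Real.norm_eq_abs, abs_inv, abs_of_nonneg (norm_nonneg _),
        inv_mul_cancel₀ h0]
    have hf'u : f' u = 1 := by
      rw [hf'_def, hu_def]
      simp only [ContinuousLinearMap.smul_apply, map_smul, smul_eq_mul]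
      rw [hA1]
      field_simp
    have hf' : ‖f'‖ = 1 := by
      refine le_antisymm (ContinuousLinearMap.opNorm_le_bound _ zero_le_one fun y' => ?_) ?_
      · rw [hf'_def]
        simp only [ContinuousLinearMap.smul_apply, smul_eq_mul]
        calc ‖‖g.comp j‖⁻¹ * (g.comp j) y'‖
            = ‖g.comp j‖⁻¹ * ‖(g.comp j) y'‖ := by
              rw [norm_mul, Real.norm_eq_abs, abs_inv, abs_norm]
          _ ≤ ‖g.comp j‖⁻¹ * (‖g.comp j‖ * ‖y'‖) := by
              refine mul_le_mul_of_nonneg_left ((g.comp j).le_opNorm _) (by positivity)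
          _ = 1 * ‖y'‖ := by field_simp
      · calc (1:ℝ) = ‖f' u‖ := by rw [hf'u]; simp
          _ ≤ ‖f'‖ * ‖u‖ := f'.le_opNorm _
          _ = ‖f'‖ := by rw [hu, mul_one]
    have hle := abs_le_numRadius T hu hf' hf'u
    rw [hvT] at hle
    have heq : (g.comp j) (T (π y)) = ‖g.comp j‖ * ‖π y‖ * f' (T u) := by
      rw [hf'_def, hu_def]
      simp only [ContinuousLinearMap.smul_apply, map_smul, smul_eq_mul]
      field_simp
    have hca : ‖g.comp j‖ * ‖π y‖ ≤ 1 := by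
      nlinarith [mul_nonneg (norm_nonneg (g.comp jZ)) (norm_nonneg (q y))]
    rw [hval, heq, abs_mul, abs_of_nonneg (by positivity : (0:ℝ) ≤ ‖g.comp j‖ * ‖π y‖)]
    nlinarith [abs_nonneg (f' (T u)), mul_nonneg (norm_nonneg (g.comp j)) (norm_nonneg (π y))]
  have hvTt : NumRadius Tt = 1 := by
    have hmem1 : |ft (Tt (j x))| ∈ {r : ℝ | ∃ (y : X) (g : X →L[ℝ] ℝ),
        ‖y‖ = 1 ∧ ‖g‖ = 1 ∧ g y = 1 ∧ r = |g (Tt y)|} :=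
      ⟨j x, ft, hjx, hft_norm, by rw [hftj, hfx], rfl⟩
    have hsubset : {r : ℝ | ∃ (x' : W) (f' : W →L[ℝ] ℝ),
        ‖x'‖ = 1 ∧ ‖f'‖ = 1 ∧ f' x' = 1 ∧ r = |f' (T x')|} ⊆
        {r : ℝ | ∃ (y : X) (g : X →L[ℝ] ℝ),
        ‖y‖ = 1 ∧ ‖g‖ = 1 ∧ g y = 1 ∧ r = |g (Tt y)|} := by
      rintro r ⟨x', f', hx', hf', hfx', rfl⟩
      have hftj' : ∀ u : W, (f'.comp π) (j u) = f' u := by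
        intro u; simp only [ContinuousLinearMap.comp_apply, hπj]
      have hfn : ‖f'.comp π‖ = 1 := by
        refine le_antisymm (ContinuousLinearMap.opNorm_le_bound _ zero_le_one fun y => ?_) ?_
        · rw [one_mul]
          calc ‖f' (π y)‖ ≤ ‖f'‖ * ‖π y‖ := f'.le_opNorm _
            _ ≤ ‖y‖ := by rw [hf', one_mul]; exact hπ1 y
        · have hjx' : ‖j x'‖ = 1 := by rw [hje, hx']
          calc (1:ℝ) = ‖(f'.comp π) (j x')‖ := by rw [hftj', hfx']; simp
            _ ≤ ‖f'.comp π‖ * ‖j x'‖ := (f'.comp π).le_opNorm _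
            _ = ‖f'.comp π‖ := by rw [hjx', mul_one]
      refine ⟨j x', f'.comp π, by rw [hje, hx'], hfn, by rw [hftj', hfx'], ?_⟩
      have : (f'.comp π) (Tt (j x')) = f' (T x') := by
        rw [hTt_apply]
        simp only [ContinuousLinearMap.comp_apply, hπj]
      rw [this]
    unfold NumRadius
    refine le_antisymm (csSup_le ⟨_, hmem1⟩ hTt_ub) ?_
    have hge : NumRadius T ≤ sSup {r : ℝ | ∃ (y : X) (g : X →L[ℝ] ℝ),
        ‖y‖ = 1 ∧ ‖g‖ = 1 ∧ g y = 1 ∧ r = |g (Tt y)|} := by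
      unfold NumRadius
      exact csSup_le_csSup ⟨1, hTt_ub⟩ ⟨|f (T x)|, ⟨x, f, hx, hf, hfx, rfl⟩⟩ hsubset
    rw [hvT] at hge
    exact hge
  -- apply the weak BPB property of X
  have hftTt : ft (Tt (j x)) = f (T x) := by
    rw [hTt_apply]
    simp only [hftdef, ContinuousLinearMap.comp_apply, hπj]
  obtain ⟨S, y₀, g₀, hy₀, hg₀, hg₀y, hatt, hgft, hyx, hST⟩ :=
    hmain Tt (j x) ft hvTt hjx hft_norm (by rw [hftj, hfx]) (by rwa [hftTt])
  set w₀ := π y₀ with hw₀def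
  set z₀ := q y₀ with hz₀def
  set gW := g₀.comp j with hgWdef
  set gZ := g₀.comp jZ with hgZdef
  obtain ⟨hA1, hA2, hA3⟩ := squeeze j jZ π q hN hπj hqj hπjZ hqjZ hdecomp hnorm g₀ y₀ hg₀ hy₀ hg₀y
  have hb : ‖z₀‖ < ε' := by
    have h1 : z₀ = q (y₀ - j x) := by rw [map_sub, hqj, sub_zero]
    calc ‖z₀‖ = ‖q (y₀ - j x)‖ := by rw [← h1]
      _ ≤ ‖y₀ - j x‖ := hq1 _
      _ < ε' := hyx
  have hgZft : ∀ v : Z, gZ v = (g₀ - ft) (jZ v) := by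
    intro v
    simp only [hgZdef, ContinuousLinearMap.sub_apply, ContinuousLinearMap.comp_apply,
      hftdef, hπjZ, map_zero, sub_zero]
  have hd : ‖gZ‖ < ε' := by
    have h1 : ‖gZ‖ ≤ ‖g₀ - ft‖ := by
      refine ContinuousLinearMap.opNorm_le_bound _ (norm_nonneg _) fun v => ?_
      rw [hgZft v]
      calc ‖(g₀ - ft) (jZ v)‖ ≤ ‖g₀ - ft‖ * ‖jZ v‖ := (g₀ - ft).le_opNorm _
        _ = ‖g₀ - ft‖ * ‖v‖ := by rw [hjZe]
    exact lt_of_le_of_lt h1 hgft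
  have hdle1 : ‖gZ‖ ≤ 1 := by
    refine ContinuousLinearMap.opNorm_le_bound _ zero_le_one fun v => ?_
    rw [one_mul]
    calc ‖g₀ (jZ v)‖ ≤ ‖g₀‖ * ‖jZ v‖ := g₀.le_opNorm _
      _ = ‖v‖ := by rw [hg₀, hjZe, one_mul]
  have hpair : ∀ s t : ℝ, 0 ≤ s → 0 ≤ t → ‖gW‖ * s + ‖gZ‖ * t ≤ N s t :=
    fun s t hs ht => pairing j jZ π q hN hπj hqj hπjZ hqjZ hnorm g₀ hg₀.le s t hs ht
  have hNab : N ‖w₀‖ ‖z₀‖ = 1 := by rw [← hnorm, hy₀]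
  obtain ⟨ha, hc, hdb, hN1b, hdpair⟩ := hcase ‖w₀‖ ‖z₀‖ ‖gW‖ ‖gZ‖
    (norm_nonneg _) (norm_nonneg _) (norm_nonneg _) (norm_nonneg _)
    hNab hA3 hpair (lt_of_lt_of_le hb hε'κ) (lt_of_lt_of_le hd hε'κ)
  have hgWw : gW w₀ = 1 := by rw [hA1, ha, hc, mul_one]
  have hgZz : gZ z₀ = 0 := by rw [hA2, hdb]
  -- the operator on W
  set Ju : W →L[ℝ] X := j + gW.smulRight (jZ z₀) with hJudef
  set S₁ : W →L[ℝ] W :=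
    π.comp (S.comp Ju) + (gZ.comp (q.comp (S.comp Ju))).smulRight w₀ with hS₁def
  have hJu_apply : ∀ u : W, Ju u = j u + gW u • jZ z₀ := by
    intro u
    simp only [hJudef, ContinuousLinearMap.add_apply, ContinuousLinearMap.smulRight_apply]
  have hS₁_apply : ∀ u : W, S₁ u = π (S (Ju u)) + gZ (q (S (Ju u))) • w₀ := by
    intro u
    simp only [hS₁def, ContinuousLinearMap.add_apply, ContinuousLinearMap.smulRight_apply,
      ContinuousLinearMap.comp_apply]
  have hπJu : ∀ u : W, π (Ju u) = u := by
    intro u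
    rw [hJu_apply, map_add, hπj, map_smul, hπjZ, smul_zero, add_zero]
  have hqJu : ∀ u : W, q (Ju u) = gW u • z₀ := by
    intro u
    rw [hJu_apply, map_add, hqj, map_smul, hqjZ, zero_add]
  have hgWle : ∀ u : W, |gW u| ≤ ‖u‖ := by
    intro u
    calc |gW u| = ‖gW u‖ := (Real.norm_eq_abs _).symm
      _ ≤ ‖gW‖ * ‖u‖ := gW.le_opNorm _
      _ = ‖u‖ := by rw [hc, one_mul]
  have hJu_unit : ∀ u : W, ‖u‖ = 1 → ‖Ju u‖ ≤ 1 := by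
    intro u hu
    have h1 : ‖Ju u‖ = N ‖u‖ (|gW u| * ‖z₀‖) := by
      rw [hnorm, hπJu, hqJu, norm_smul, Real.norm_eq_abs]
    rw [h1, hu]
    have h2 : |gW u| ≤ 1 := by rw [← hu]; exact hgWle u
    calc N 1 (|gW u| * ‖z₀‖) ≤ N 1 ‖z₀‖ := by
          refine mono_right hN ?_
          rw [abs_of_nonneg (by positivity), abs_of_nonneg (norm_nonneg _)]
          exact mul_le_of_le_one_left (norm_nonneg _) h2
      _ = 1 := hN1b
  -- key estimate for any state pair of W
  have hkey : ∀ (u : W) (f' : W →L[ℝ] ℝ), ‖u‖ = 1 → ‖f'‖ = 1 → f' u = 1 →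
      |f' (S₁ u)| ≤ NumRadius S := by
    intro u f' hu hf' hfu
    set h' : X →L[ℝ] ℝ := f'.comp π + (f' w₀) • (gZ.comp q) with hh'def
    have hh'_apply : ∀ y : X, h' y = f' (π y) + f' w₀ * gZ (q y) := by
      intro y
      simp only [hh'def, ContinuousLinearMap.add_apply, ContinuousLinearMap.smul_apply,
        ContinuousLinearMap.comp_apply, smul_eq_mul]
    have hfw₀ : |f' w₀| ≤ 1 := by
      calc |f' w₀| = ‖f' w₀‖ := (Real.norm_eq_abs _).symm
        _ ≤ ‖f'‖ * ‖w₀‖ := f'.le_opNorm _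
        _ = 1 := by rw [hf', ha, mul_one]
    have hh'Ju : h' (Ju u) = 1 := by
      rw [hh'_apply, hπJu, hqJu, map_smul, smul_eq_mul, hgZz, mul_zero, mul_zero,
        add_zero, hfu]
    have hh'le : ‖h'‖ ≤ 1 := by
      refine ContinuousLinearMap.opNorm_le_bound _ zero_le_one fun y => ?_
      rw [one_mul, hh'_apply, Real.norm_eq_abs]
      have e1 : |f' (π y)| ≤ ‖π y‖ := by
        calc |f' (π y)| = ‖f' (π y)‖ := (Real.norm_eq_abs _).symm
          _ ≤ ‖f'‖ * ‖π y‖ := f'.le_opNorm _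
          _ = ‖π y‖ := by rw [hf', one_mul]
      have e2 : |gZ (q y)| ≤ ‖gZ‖ * ‖q y‖ := by
        rw [← Real.norm_eq_abs]; exact gZ.le_opNorm _
      have e3 : |f' (π y) + f' w₀ * gZ (q y)| ≤ ‖π y‖ + ‖gZ‖ * ‖q y‖ := by
        calc |f' (π y) + f' w₀ * gZ (q y)| ≤ |f' (π y)| + |f' w₀ * gZ (q y)| := abs_add_le _ _
          _ = |f' (π y)| + |f' w₀| * |gZ (q y)| := by rw [abs_mul]
          _ ≤ ‖π y‖ + 1 * (‖gZ‖ * ‖q y‖) := by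
              refine add_le_add e1 ?_
              exact mul_le_mul hfw₀ e2 (abs_nonneg _) zero_le_one
          _ = ‖π y‖ + ‖gZ‖ * ‖q y‖ := by rw [one_mul]
      calc |f' (π y) + f' w₀ * gZ (q y)| ≤ ‖π y‖ + ‖gZ‖ * ‖q y‖ := e3
        _ ≤ N ‖π y‖ ‖q y‖ := hdpair _ _ (norm_nonneg _) (norm_nonneg _)
        _ = ‖y‖ := (hnorm y).symm
    have hJu1 : ‖Ju u‖ = 1 := by
      refine le_antisymm (hJu_unit u hu) ?_
      have : (1:ℝ) = ‖h' (Ju u)‖ := by rw [hh'Ju]; simp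
      calc (1:ℝ) = ‖h' (Ju u)‖ := this
        _ ≤ ‖h'‖ * ‖Ju u‖ := h'.le_opNorm _
        _ ≤ 1 * ‖Ju u‖ := mul_le_mul_of_nonneg_right hh'le (norm_nonneg _)
        _ = ‖Ju u‖ := one_mul _
    have hh'1 : ‖h'‖ = 1 := by
      refine le_antisymm hh'le ?_
      have : (1:ℝ) = ‖h' (Ju u)‖ := by rw [hh'Ju]; simp
      calc (1:ℝ) = ‖h' (Ju u)‖ := this
        _ ≤ ‖h'‖ * ‖Ju u‖ := h'.le_opNorm _
        _ = ‖h'‖ := by rw [hJu1, mul_one]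
    have hval : f' (S₁ u) = h' (S (Ju u)) := by
      rw [hS₁_apply, hh'_apply, map_add, map_smul, smul_eq_mul]
      ring
    rw [hval]
    exact abs_le_numRadius S hJu1 hh'1 hh'Ju
  -- attainment
  have hJuw₀ : Ju w₀ = y₀ := by
    rw [hJu_apply, hgWw, one_smul, hw₀def, hz₀def, hdecomp]
  have hgWS₁ : gW (S₁ w₀) = g₀ (S y₀) := by
    rw [hS₁_apply, hJuw₀, map_add, map_smul, smul_eq_mul, hgWw, mul_one]
    have : gW (π (S y₀)) + gZ (q (S y₀)) = g₀ (j (π (S y₀)) + jZ (q (S y₀))) := by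
      rw [map_add]; rfl
    rw [this, hdecomp]
  have hattW : |gW (S₁ w₀)| = NumRadius S := by rw [hgWS₁]; exact hatt
  have hvS₁ : NumRadius S₁ = |gW (S₁ w₀)| := by
    have hub : ∀ r ∈ {r : ℝ | ∃ (u : W) (f' : W →L[ℝ] ℝ),
        ‖u‖ = 1 ∧ ‖f'‖ = 1 ∧ f' u = 1 ∧ r = |f' (S₁ u)|}, r ≤ |gW (S₁ w₀)| := by
      rintro r ⟨u, f', hu, hf', hfu, rfl⟩
      rw [hattW]
      exact hkey u f' hu hf' hfu
    have hmem : |gW (S₁ w₀)| ∈ {r : ℝ | ∃ (u : W) (f' : W →L[ℝ] ℝ),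
        ‖u‖ = 1 ∧ ‖f'‖ = 1 ∧ f' u = 1 ∧ r = |f' (S₁ u)|} :=
      ⟨w₀, gW, ha, hc, hgWw, rfl⟩
    unfold NumRadius
    exact le_antisymm (csSup_le ⟨_, hmem⟩ hub) (le_csSup ⟨_, hub⟩ hmem)
  -- closeness
  have hwx : ‖w₀ - x‖ < ε' := by
    have h1 : w₀ - x = π (y₀ - j x) := by rw [map_sub, hπj]
    calc ‖w₀ - x‖ = ‖π (y₀ - j x)‖ := by rw [h1]
      _ ≤ ‖y₀ - j x‖ := hπ1 _
      _ < ε' := hyx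
  have hgWf : ‖gW - f‖ < ε' := by
    have h1 : ∀ u : W, (gW - f) u = (g₀ - ft) (j u) := by
      intro u
      simp only [ContinuousLinearMap.sub_apply, hgWdef, ContinuousLinearMap.comp_apply,
        hftdef, hπj]
    have h2 : ‖gW - f‖ ≤ ‖g₀ - ft‖ := by
      refine ContinuousLinearMap.opNorm_le_bound _ (norm_nonneg _) fun u => ?_
      rw [h1 u]
      calc ‖(g₀ - ft) (j u)‖ ≤ ‖g₀ - ft‖ * ‖j u‖ := (g₀ - ft).le_opNorm _
        _ = ‖g₀ - ft‖ * ‖u‖ := by rw [hje]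
    exact lt_of_le_of_lt h2 hgft
  -- operator norm estimate
  have hS₁T : ‖S₁ - T‖ ≤ 4 * ε' := by
    refine ContinuousLinearMap.opNorm_le_bound _ (by positivity) fun u => ?_
    have hπTt : π (Tt (Ju u)) = T u := by
      rw [hTt_apply]
      rw [hπj, hπJu]
    have hqTt : q (Tt (Ju u)) = 0 := by
      rw [hTt_apply, hqj]
    have hdiff : S₁ u - T u = π ((S - Tt) (Ju u)) + gZ (q ((S - Tt) (Ju u))) • w₀ := by
      rw [hS₁_apply]
      rw [ContinuousLinearMap.sub_apply, map_sub, map_sub, hπTt, hqTt, sub_zero]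
      abel
    have hJuB : ‖Ju u‖ ≤ 2 * ‖u‖ := by
      rw [hJu_apply]
      calc ‖j u + gW u • jZ z₀‖ ≤ ‖j u‖ + ‖gW u • jZ z₀‖ := norm_add_le _ _
        _ = ‖u‖ + |gW u| * ‖z₀‖ := by
            rw [hje, norm_smul, Real.norm_eq_abs, hjZe]
        _ ≤ ‖u‖ + ‖u‖ * 1 := by
            refine add_le_add le_rfl ?_
            refine mul_le_mul (hgWle u) (le_trans hb.le hε'1) (norm_nonneg _) (norm_nonneg _)
        _ = 2 * ‖u‖ := by ring
    have hDB : ‖(S - Tt) (Ju u)‖ ≤ ε' * (2 * ‖u‖) := by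
      calc ‖(S - Tt) (Ju u)‖ ≤ ‖S - Tt‖ * ‖Ju u‖ := (S - Tt).le_opNorm _
        _ ≤ ε' * (2 * ‖u‖) := by
            refine mul_le_mul hST.le hJuB (norm_nonneg _) hε'pos.le
    have hgZD : |gZ (q ((S - Tt) (Ju u)))| ≤ ε' * (2 * ‖u‖) := by
      calc |gZ (q ((S - Tt) (Ju u)))| = ‖gZ (q ((S - Tt) (Ju u)))‖ := (Real.norm_eq_abs _).symm
        _ ≤ ‖gZ‖ * ‖q ((S - Tt) (Ju u))‖ := gZ.le_opNorm _
        _ ≤ 1 * ‖(S - Tt) (Ju u)‖ := by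
            refine mul_le_mul hdle1 (hq1 _) (norm_nonneg _) zero_le_one
        _ ≤ ε' * (2 * ‖u‖) := by rw [one_mul]; exact hDB
    rw [ContinuousLinearMap.sub_apply, hdiff]
    calc ‖π ((S - Tt) (Ju u)) + gZ (q ((S - Tt) (Ju u))) • w₀‖
        ≤ ‖π ((S - Tt) (Ju u))‖ + ‖gZ (q ((S - Tt) (Ju u))) • w₀‖ := norm_add_le _ _
      _ ≤ ε' * (2 * ‖u‖) + ε' * (2 * ‖u‖) := by
          refine add_le_add ?_ ?_
          · exact le_trans (hπ1 _) hDB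
          · rw [norm_smul, Real.norm_eq_abs, ha, mul_one]
            exact hgZD
      _ = 4 * ε' * ‖u‖ := by ring
  have hε'ε : ε' < ε := lt_of_le_of_lt hε'le (by linarith)
  exact ⟨S₁, w₀, gW, ha, hc, hgWw, hvS₁.symm, lt_trans hgWf hε'ε,
    lt_trans hwx hε'ε, lt_of_le_of_lt hS₁T (by linarith)⟩

end AbsHelp

set_option maxHeartbeats 1000000 in
theorem weak_bpbnu_absolute_summand (W Z X : Type*)
    [NormedAddCommGroup W] [NormedSpace ℝ W] [CompleteSpace W]
    [NormedAddCommGroup Z] [NormedSpace ℝ Z] [CompleteSpace Z]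
    [NormedAddCommGroup X] [NormedSpace ℝ X] [CompleteSpace X]
    (N : ℝ → ℝ → ℝ) (hN : IsAbsoluteNorm N)
    (e : X ≃L[ℝ] W × Z) (he : ∀ x : X, ‖x‖ = N ‖(e x).1‖ ‖(e x).2‖)
    (htype : AbsNormTypeOne N ∨ AbsNormTypeInfty N)
    (h : HasWeakBPBnu X) : HasWeakBPBnu W := by
  classical
  set j : W →L[ℝ] X := (e.symm : W × Z →L[ℝ] X).comp (ContinuousLinearMap.inl ℝ W Z) with hj
  set jZ : Z →L[ℝ] X := (e.symm : W × Z →L[ℝ] X).comp (ContinuousLinearMap.inr ℝ W Z) with hjZ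
  set π : X →L[ℝ] W := (ContinuousLinearMap.fst ℝ W Z).comp (e : X →L[ℝ] W × Z) with hπ
  set q : X →L[ℝ] Z := (ContinuousLinearMap.snd ℝ W Z).comp (e : X →L[ℝ] W × Z) with hq
  have hπj : ∀ u : W, π (j u) = u := by
    intro u
    simp [hπ, hj]
  have hqj : ∀ u : W, q (j u) = 0 := by
    intro u
    simp [hq, hj]
  have hπjZ : ∀ v : Z, π (jZ v) = 0 := by
    intro v
    simp [hπ, hjZ]
  have hqjZ : ∀ v : Z, q (jZ v) = v := by
    intro v
    simp [hq, hjZ]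
  have hdecomp : ∀ x : X, j (π x) + jZ (q x) = x := by
    intro x
    simp only [hj, hjZ, hπ, hq, ContinuousLinearMap.comp_apply,
      ContinuousLinearMap.inl_apply, ContinuousLinearMap.inr_apply,
      ContinuousLinearMap.coe_fst', ContinuousLinearMap.coe_snd',
      ContinuousLinearEquiv.coe_coe]
    rw [← map_add]
    have : ((e x).1, (0:Z)) + ((0:W), (e x).2) = e x := by
      simp [Prod.ext_iff]
    rw [this, e.symm_apply_apply]
  have hnorm : ∀ x : X, ‖x‖ = N ‖π x‖ ‖q x‖ := by
    intro x
    rw [he x]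
    rfl
  rcases htype with ⟨K, hK, hKle⟩ | ⟨b₀, hb₀, hNb₀⟩
  · refine AbsHelp.core hN j jZ π q hπj hqj hπjZ hqjZ hdecomp hnorm K hK ?_ h
    intro a b c d ha hb hc hd hNab hsum hpairN hbκ hdκ
    have haa : a ≤ 1 := by
      have := AbsHelp.fst_le hN a b
      rwa [abs_of_nonneg ha, hNab] at this
    have hcc : c ≤ 1 := by
      have := hpairN 1 0 zero_le_one le_rfl
      rw [hN.one_zero, mul_one, mul_zero, add_zero] at this
      exact this
    have hKab : a + K * b ≤ 1 := by
      have := hKle a b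
      rwa [abs_of_nonneg ha, abs_of_nonneg hb, hNab] at this
    have hb0 : b = 0 := by
      have h1 : c * a ≤ a := mul_le_of_le_one_left ha hcc
      nlinarith
    have ha1 : a = 1 := by
      have h1 : N a 0 = a := by rw [AbsHelp.N_s_zero hN, abs_of_nonneg ha]
      rw [hb0] at hNab
      linarith [h1 ▸ hNab]
    have hc1 : c = 1 := by
      rw [hb0, ha1] at hsum
      simpa using hsum
    refine ⟨ha1, hc1, by rw [hb0, mul_zero], by rw [hb0]; exact hN.one_zero,
      fun s t hs ht => ?_⟩
    have h1 := hKle s t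
    rw [abs_of_nonneg hs, abs_of_nonneg ht] at h1
    have h2 : d * t ≤ K * t := mul_le_mul_of_nonneg_right hdκ.le ht
    linarith
  · refine AbsHelp.core hN j jZ π q hπj hqj hπjZ hqjZ hdecomp hnorm b₀ hb₀ ?_ h
    intro a b c d ha hb hc hd hNab hsum hpairN hbκ hdκ
    have haa : a ≤ 1 := by
      have := AbsHelp.fst_le hN a b
      rwa [abs_of_nonneg ha, hNab] at this
    have hcc : c ≤ 1 := by
      have := hpairN 1 0 zero_le_one le_rfl
      rw [hN.one_zero, mul_one, mul_zero, add_zero] at this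
      exact this
    have h1 : c + d * b₀ ≤ 1 := by
      have := hpairN 1 b₀ zero_le_one hb₀.le
      rwa [hNb₀, mul_one] at this
    have hd0 : d = 0 := by
      have h2 : c * a ≤ c := mul_le_of_le_one_right hc haa
      nlinarith
    have hca : c * a = 1 := by
      rw [hd0] at hsum
      linarith
    have ha1 : a = 1 := by
      have h3 : c * a ≤ a := mul_le_of_le_one_left ha hcc
      linarith
    have hc1 : c = 1 := by
      have h3 : c * a ≤ c := mul_le_of_le_one_right hc haa
      linarith
    have hN1b : N 1 b = 1 := by
      have hstep : N 1 b ≤ N 1 b₀ := by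
        refine AbsHelp.mono_right hN ?_
        rw [abs_of_nonneg hb, abs_of_nonneg hb₀.le]
        exact hbκ.le
      have hge : (1:ℝ) ≤ N 1 b := by
        have := AbsHelp.fst_le hN 1 b
        simpa using this
      rw [hNb₀] at hstep
      linarith
    refine ⟨ha1, hc1, by rw [hd0, zero_mul], hN1b, fun s t hs ht => ?_⟩
    rw [hd0, zero_mul, add_zero]
    have := AbsHelp.fst_le hN s t
    rwa [abs_of_nonneg hs] at this
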